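/- Let ρ be a 4×4 density matrix with two-qubit Bloch representation {x, y, T}, let P be the projector onto the symmetric subspace of ℂ⁴⊗ℂ⁴, and set σ = (8/5)·P(ρ ⊗ I₄/4)P, a state on four qubits labelled (1,2,3,4) where (1,2) is the first clone and (3,4) the second. Then the partial trace of σ over qubits 2 and 4 equals (1/4)·(I₄ + (3/5)·Σᵢ xᵢ σᵢ⊗I₂ + (3/5)·Σᵢ xᵢ I₂⊗σᵢ + (1/5)·Σⱼ σⱼ⊗σⱼ); i.e. the cross-clone state ρ̃₁₃ has Bloch representation {(3/5)x, (3/5)x, (1/5)I₃}, independently of y and T. -/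

import Mathlib

open Matrix Kronecker
open scoped ComplexOrder

/-- The three Pauli matrices. -/
noncomputable def pauli : Fin 3 → Matrix (Fin 2) (Fin 2) ℂ :=
  ![!![0, 1; 1, 0], !![0, -Complex.I; Complex.I, 0], !![1, 0; 0, -1]]

/-- The swap operator on `ℂᵈ ⊗ ℂᵈ`. -/
noncomputable def swapOp (d : Type*) [DecidableEq d] : Matrix (d × d) (d × d) ℂ :=
  Matrix.of fun p q => if p.1 = q.2 ∧ p.2 = q.1 then 1 else 0

/-- The projector `P = (I + S)/2` onto the symmetric subspace of `ℂᵈ ⊗ ℂᵈ`. -/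
noncomputable def symProj (d : Type*) [DecidableEq d] : Matrix (d × d) (d × d) ℂ :=
  (1/2 : ℂ) • (1 + swapOp d)

lemma swapOp_mul {d : Type*} [DecidableEq d] [Fintype d] (M : Matrix (d×d) (d×d) ℂ) (p q) :
    (swapOp d * M) p q = M (p.2, p.1) q := by
  simp only [Matrix.mul_apply, swapOp, Matrix.of_apply]
  rw [Finset.sum_eq_single (p.2, p.1)]
  · simp
  · rintro ⟨r1, r2⟩ _ hr
    simp only [ite_mul, one_mul, zero_mul, ite_eq_right_iff]
    rintro ⟨h1, h2⟩; exact absurd (by simp [← h1, ← h2]) hr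
  · intro h; simp at h

lemma mul_swapOp {d : Type*} [DecidableEq d] [Fintype d] (M : Matrix (d×d) (d×d) ℂ) (p q) :
    (M * swapOp d) p q = M p (q.2, q.1) := by
  simp only [Matrix.mul_apply, swapOp, Matrix.of_apply]
  rw [Finset.sum_eq_single (q.2, q.1)]
  · simp
  · rintro ⟨r1, r2⟩ _ hr
    simp only [mul_ite, mul_one, mul_zero, ite_eq_right_iff]
    rintro ⟨h1, h2⟩; exact absurd (by simp [h1, h2]) hr
  · intro h; simp at h

lemma symProj_conj {d : Type*} [DecidableEq d] [Fintype d] (M : Matrix (d×d) (d×d) ℂ) (p q) :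
    (symProj d * M * symProj d) p q
      = (1/4 : ℂ) * (M p q + M (p.2, p.1) q + M p (q.2, q.1) + M (p.2, p.1) (q.2, q.1)) := by
  simp only [symProj, Matrix.smul_mul, Matrix.mul_smul, Matrix.add_mul, Matrix.mul_add,
    Matrix.one_mul, Matrix.mul_one, Matrix.smul_apply, Matrix.add_apply, smul_eq_mul,
    swapOp_mul, mul_swapOp]
  ring

set_option maxHeartbeats 4000000 in
/-- Let `ρ` be a two-qubit density matrix with Bloch representation `{x, y, T}`
(here `ℂ⁴` is realised as `ℂ² ⊗ ℂ²`), and let `σ = (8/5)·P(ρ ⊗ I₄/4)P` be the nonlocal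
cloner output on four qubits `(1,2,3,4)`, where `(1,2)` is the first clone and `(3,4)` the
second.  Tracing out qubits `2` and `4` from `σ` yields
`(1/4)(I₄ + (3/5)Σᵢ xᵢ σᵢ⊗I₂ + (3/5)Σᵢ xᵢ I₂⊗σᵢ + (1/5)Σⱼ σⱼ⊗σⱼ)`, i.e. the cross-clone
state `ρ̃₁₃` has Bloch representation `{(3/5)x, (3/5)x, (1/5)I₃}`, independently of `y`
and `T`. -/
theorem nonlocal_cloner_cross_clone_state (x y : Fin 3 → ℝ) (t : Fin 3 → Fin 3 → ℝ)
    (ρ : Matrix (Fin 2 × Fin 2) (Fin 2 × Fin 2) ℂ)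
    (hρ : ρ = (1/4 : ℂ) • ((1 : Matrix (Fin 2 × Fin 2) (Fin 2 × Fin 2) ℂ)
        + ∑ i : Fin 3, (x i : ℂ) • (pauli i ⊗ₖ 1)
        + ∑ i : Fin 3, (y i : ℂ) • ((1 : Matrix (Fin 2) (Fin 2) ℂ) ⊗ₖ pauli i)
        + ∑ i : Fin 3, ∑ j : Fin 3, (t i j : ℂ) • (pauli i ⊗ₖ pauli j)))
    (hpsd : ρ.PosSemidef) :
    (Matrix.of fun (a b : Fin 2 × Fin 2) => ∑ c : Fin 2, ∑ d : Fin 2,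
        ((8/5 : ℂ) • (symProj (Fin 2 × Fin 2)
          * (ρ ⊗ₖ ((1/4 : ℂ) • (1 : Matrix (Fin 2 × Fin 2) (Fin 2 × Fin 2) ℂ)))
          * symProj (Fin 2 × Fin 2))) ((a.1, c), (a.2, d)) ((b.1, c), (b.2, d)))
    = (1/4 : ℂ) • ((1 : Matrix (Fin 2 × Fin 2) (Fin 2 × Fin 2) ℂ)
        + (3/5 : ℂ) • ∑ i : Fin 3, (x i : ℂ) • (pauli i ⊗ₖ 1)
        + (3/5 : ℂ) • ∑ i : Fin 3, (x i : ℂ) • ((1 : Matrix (Fin 2) (Fin 2) ℂ) ⊗ₖ pauli i)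
        + (1/5 : ℂ) • ∑ j : Fin 3, pauli j ⊗ₖ pauli j) := by
  subst hρ
  ext ⟨a1, a2⟩ ⟨b1, b2⟩
  fin_cases a1 <;> fin_cases a2 <;> fin_cases b1 <;> fin_cases b2 <;>
  · simp only [Matrix.of_apply, Matrix.smul_apply, symProj_conj, Matrix.kroneckerMap_apply,
      Fin.sum_univ_two, Fin.sum_univ_three, Matrix.add_apply, Matrix.one_apply,
      Prod.mk.injEq, smul_eq_mul]
    norm_num [pauli, Matrix.cons_val_two, Matrix.vecHead, Matrix.vecTail]
    try ring
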